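/- Every x ∈ ℝ^n satisfying F̃(x) = 0 obeys, for each 1 ≤ i ≤ n−1, the back-substitution identity x_i · Π_{j=i+1}^{n} ã_{j,j−1} = x_n S_{i+1}^{n} + ã_{i+1,0} Π_{j=i+2}^{n} ã_{j,j−1} + Σ_{k=i+2}^{n} ã_{k0} (Π_{l=k+1}^{n} ã_{l,l−1}) S_{i+1}^{k−1}. -/
import Mathlib


/-!
Degenerate stochastic Lotka–Volterra food chains:
`δ̃(n) > 0` iff `F̃` has a (necessarily unique) positive zero.
-/

/-- The set `A_a^b` of involutive permutations of `ℕ` that fix every point outside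
`{a, …, b}` and move every point by at most one (products of disjoint transpositions
of the form `(i i+1)` supported in `{a, …, b}`). -/
def Aset (a b : ℕ) : Set (Equiv.Perm ℕ) :=
  {σ | σ * σ = 1 ∧ (∀ j, j ∉ Finset.Icc a b → σ j = j) ∧
    ∀ j, |((σ j : ℤ)) - (j : ℤ)| ≤ 1}

/-- `S_a^b = Σ_{σ ∈ A_a^b} Π_{j=a}^{b} ã_{j,σ(j)}` (equal to `1` when `a > b`). -/
noncomputable def Ssum (ta : ℕ → ℕ → ℝ) (a b : ℕ) : ℝ :=
  ∑ᶠ σ ∈ Aset a b, ∏ j ∈ Finset.Icc a b, ta j (σ j)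

/-- `δ̃(m) = ã_{10} Π_{j=2}^{m} ã_{j,j−1} − Σ_{k=2}^{m} ã_{k0} (Π_{l=k+1}^{m} ã_{l,l−1}) S_1^{k−1}`. -/
noncomputable def deltaT (ta : ℕ → ℕ → ℝ) (m : ℕ) : ℝ :=
  ta 1 0 * ∏ j ∈ Finset.Icc 2 m, ta j (j - 1) -
    ∑ k ∈ Finset.Icc 2 m, ta k 0 * (∏ l ∈ Finset.Icc (k + 1) m, ta l (l - 1)) * Ssum ta 1 (k - 1)

/-- The drift field `F̃` of the Lotka–Volterra food chain (components indexed by `1 ≤ i ≤ n`). -/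
def Ft (n : ℕ) (ta : ℕ → ℕ → ℝ) (x : ℕ → ℝ) (i : ℕ) : ℝ :=
  if i = 1 then ta 1 0 - ta 1 1 * x 1 - ta 1 2 * x 2
  else if i = n then -ta n 0 + ta n (n - 1) * x (n - 1) - ta n n * x n
  else -ta i 0 + ta i (i - 1) * x (i - 1) - ta i i * x i - ta i (i + 1) * x (i + 1)

lemma aset_one (a b : ℕ) : (1 : Equiv.Perm ℕ) ∈ Aset a b :=
  ⟨rfl, fun _ _ => rfl, fun j => by simp⟩

lemma aset_invol {a b : ℕ} {σ : Equiv.Perm ℕ} (h : σ ∈ Aset a b) (j : ℕ) :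
    σ (σ j) = j := by
  have := h.1
  calc σ (σ j) = (σ * σ) j := rfl
  _ = j := by rw [this]; rfl

lemma aset_apply_a {a b : ℕ} {σ : Equiv.Perm ℕ} (h : σ ∈ Aset a b) :
    σ a = a ∨ (σ a = a + 1 ∧ a + 1 ≤ b) := by
  obtain ⟨h1, h2, h3⟩ := h
  have ha := h3 a
  rw [abs_le] at ha
  have : σ a = a ∨ σ a = a + 1 ∨ (σ a : ℤ) = (a : ℤ) - 1 := by omega
  rcases this with h | h | h
  · exact Or.inl h
  · refine Or.inr ⟨h, ?_⟩
    by_contra hb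
    have : σ (a+1) = a + 1 := h2 _ (by simp [Finset.mem_Icc]; omega)
    have := σ.injective (h.trans this.symm)
    omega
  · exfalso
    have ha1 : 1 ≤ a := by omega
    have hfix : σ (a - 1) = a - 1 := h2 _ (by simp [Finset.mem_Icc]; omega)
    have : σ a = a - 1 := by omega
    have := σ.injective (this.trans hfix.symm)
    omega

lemma aset_gt {a b : ℕ} (h : b < a) : Aset a b = {1} := by
  ext σ
  simp only [Set.mem_singleton_iff]
  constructor
  · rintro ⟨_, h2, _⟩
    ext j
    exact h2 j (by simp [Finset.mem_Icc]; omega)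
  · rintro rfl; exact aset_one a b

lemma aset_eq_self {a : ℕ} : Aset a a = {1} := by
  ext σ
  simp only [Set.mem_singleton_iff]
  constructor
  · intro hσ
    have ha : σ a = a := by
      rcases aset_apply_a hσ with h | ⟨_, h⟩
      · exact h
      · omega
    ext j
    by_cases hj : j = a
    · subst hj; exact ha
    · exact hσ.2.1 j (by simp [Finset.mem_Icc]; omega)
  · rintro rfl; exact aset_one a a

lemma aset_filter_fix {a b : ℕ} : {σ ∈ Aset a b | σ a = a} = Aset (a + 1) b := by
  ext σ
  constructor
  · rintro ⟨⟨h1, h2, h3⟩, ha⟩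
    refine ⟨h1, fun j hj => ?_, h3⟩
    by_cases hja : j = a
    · subst hja; exact ha
    · exact h2 j (by simp only [Finset.mem_Icc, not_and, not_le] at hj ⊢; omega)
  · rintro ⟨h1, h2, h3⟩
    have ha : σ a = a := h2 a (by simp only [Finset.mem_Icc, not_and, not_le]; omega)
    exact ⟨⟨h1, fun j hj => h2 j (by simp only [Finset.mem_Icc, not_and, not_le] at hj ⊢; omega), h3⟩, ha⟩

lemma invol_ne {τ : Equiv.Perm ℕ} (hτinv : ∀ j, τ (τ j) = j) {c j : ℕ}
    (hc : τ c = c) (hj : j ≠ c) : τ j ≠ c := fun h => hj (by rw [← hτinv j, h, hc])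

lemma aset_swap_mem {a b : ℕ} (hab : a + 1 ≤ b) {τ : Equiv.Perm ℕ} (hτ : τ ∈ Aset (a+2) b) :
    Equiv.swap a (a+1) * τ ∈ Aset a b ∧ (Equiv.swap a (a+1) * τ) a = a + 1 := by
  obtain ⟨h1, h2, h3⟩ := hτ
  have hinv : ∀ j, τ (τ j) = j := aset_invol ⟨h1, h2, h3⟩
  have hfa : τ a = a := h2 a (by simp only [Finset.mem_Icc, not_and, not_le]; omega)
  have hfa1 : τ (a+1) = a + 1 := h2 (a+1) (by simp only [Finset.mem_Icc, not_and, not_le]; omega)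
  have key : ∀ j, j ≠ a → j ≠ a + 1 → (Equiv.swap a (a+1) * τ) j = τ j := by
    intro j hja hja1
    rw [Equiv.Perm.mul_apply]
    exact Equiv.swap_apply_of_ne_of_ne (invol_ne hinv hfa hja) (invol_ne hinv hfa1 hja1)
  have ka : (Equiv.swap a (a+1) * τ) a = a + 1 := by
    rw [Equiv.Perm.mul_apply, hfa, Equiv.swap_apply_left]
  have ka1 : (Equiv.swap a (a+1) * τ) (a+1) = a := by
    rw [Equiv.Perm.mul_apply, hfa1, Equiv.swap_apply_right]
  refine ⟨⟨?_, ?_, ?_⟩, ka⟩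
  · ext j
    simp only [Equiv.Perm.mul_apply, Equiv.Perm.one_apply]
    by_cases hja : j = a
    · subst hja
      have := ka; simp only [Equiv.Perm.mul_apply] at this ka1
      rw [this, ka1]
    by_cases hja1 : j = a + 1
    · subst hja1
      have := ka1; simp only [Equiv.Perm.mul_apply] at this ka
      rw [this, ka]
    · have h5 := key j hja hja1
      simp only [Equiv.Perm.mul_apply] at h5
      rw [h5]
      have h6 := key (τ j) (invol_ne hinv hfa hja) (invol_ne hinv hfa1 hja1)
      simp only [Equiv.Perm.mul_apply] at h6
      rw [h6, hinv]
  · intro j hj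
    simp only [Finset.mem_Icc, not_and, not_le] at hj
    by_cases hja : j = a
    · omega
    by_cases hja1 : j = a + 1
    · omega
    · rw [key j hja hja1]
      exact h2 j (by simp only [Finset.mem_Icc, not_and, not_le]; omega)
  · intro j
    by_cases hja : j = a
    · subst hja; rw [ka]; simp
    by_cases hja1 : j = a + 1
    · subst hja1; rw [ka1]; simp
    · rw [key j hja hja1]; exact h3 j

lemma aset_filter_swap {a b : ℕ} (hab : a + 1 ≤ b) :
    {σ ∈ Aset a b | σ a ≠ a} = (fun τ => Equiv.swap a (a+1) * τ) '' Aset (a+2) b := by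
  ext σ
  constructor
  · rintro ⟨hσ, hne⟩
    obtain ⟨h1, h2, h3⟩ := hσ
    have hinv : ∀ j, σ (σ j) = j := aset_invol ⟨h1, h2, h3⟩
    have ha : σ a = a + 1 := by
      rcases aset_apply_a ⟨h1, h2, h3⟩ with h | ⟨h, _⟩
      · exact absurd h hne
      · exact h
    have ha1 : σ (a+1) = a := by rw [← ha, hinv]
    have key : ∀ j, j ≠ a → j ≠ a + 1 → σ j ≠ a ∧ σ j ≠ a + 1 := by
      intro j hja hja1
      constructor
      · intro h; exact hja1 (by rw [← hinv j, h, ha])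
      · intro h; exact hja (σ.injective (h.trans ha.symm))
    refine ⟨Equiv.swap a (a+1) * σ, ⟨?_, ?_, ?_⟩, ?_⟩
    · ext j
      simp only [Equiv.Perm.mul_apply, Equiv.Perm.one_apply]
      rcases eq_or_ne j a with hja | hja
      · rw [hja, ha, Equiv.swap_apply_right, ha, Equiv.swap_apply_right]
      rcases eq_or_ne j (a+1) with hja1 | hja1
      · rw [hja1, ha1, Equiv.swap_apply_left, ha1, Equiv.swap_apply_left]
      · obtain ⟨k1, k2⟩ := key j hja hja1
        rw [Equiv.swap_apply_of_ne_of_ne k1 k2]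
        obtain ⟨m1, m2⟩ := key (σ j) (fun h => hja1 (by rw [← hinv j, h, ha])) (fun h => hja (σ.injective (h.trans ha.symm)))
        rw [Equiv.swap_apply_of_ne_of_ne m1 m2, hinv]
    · intro j hj
      simp only [Finset.mem_Icc, not_and_or, not_le] at hj
      rcases eq_or_ne j a with hja | hja
      · rw [hja, Equiv.Perm.mul_apply, ha, Equiv.swap_apply_right]
      rcases eq_or_ne j (a+1) with hja1 | hja1
      · rw [hja1, Equiv.Perm.mul_apply, ha1, Equiv.swap_apply_left]
      · obtain ⟨k1, k2⟩ := key j hja hja1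
        rw [Equiv.Perm.mul_apply, Equiv.swap_apply_of_ne_of_ne k1 k2]
        exact h2 j (by simp only [Finset.mem_Icc, not_and_or, not_le]; omega)
    · intro j
      rcases eq_or_ne j a with hja | hja
      · rw [hja, Equiv.Perm.mul_apply, ha, Equiv.swap_apply_right]; simp
      rcases eq_or_ne j (a+1) with hja1 | hja1
      · rw [hja1, Equiv.Perm.mul_apply, ha1, Equiv.swap_apply_left]; simp
      · obtain ⟨k1, k2⟩ := key j hja hja1
        rw [Equiv.Perm.mul_apply, Equiv.swap_apply_of_ne_of_ne k1 k2]
        exact h3 j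
    · show Equiv.swap a (a+1) * (Equiv.swap a (a+1) * σ) = σ
      rw [← mul_assoc, Equiv.swap_mul_self, one_mul]
  · rintro ⟨τ, hτ, rfl⟩
    obtain ⟨hmem, ha⟩ := aset_swap_mem hab hτ
    exact ⟨hmem, by rw [ha]; omega⟩

lemma swap_mul_facts {a b : ℕ} {τ : Equiv.Perm ℕ} (hτ : τ ∈ Aset (a+2) b) :
    (Equiv.swap a (a+1) * τ) a = a + 1 ∧ (Equiv.swap a (a+1) * τ) (a+1) = a ∧
    ∀ j, j ≠ a → j ≠ a + 1 → (Equiv.swap a (a+1) * τ) j = τ j := by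
  obtain ⟨h1, h2, h3⟩ := hτ
  have hinv : ∀ j, τ (τ j) = j := aset_invol ⟨h1, h2, h3⟩
  have hfa : τ a = a := h2 a (by simp only [Finset.mem_Icc, not_and_or, not_le]; omega)
  have hfa1 : τ (a+1) = a + 1 := h2 (a+1) (by simp only [Finset.mem_Icc, not_and_or, not_le]; omega)
  refine ⟨?_, ?_, ?_⟩
  · rw [Equiv.Perm.mul_apply, hfa, Equiv.swap_apply_left]
  · rw [Equiv.Perm.mul_apply, hfa1, Equiv.swap_apply_right]
  · intro j hja hja1
    rw [Equiv.Perm.mul_apply]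
    exact Equiv.swap_apply_of_ne_of_ne (invol_ne hinv hfa hja) (invol_ne hinv hfa1 hja1)

lemma aset_decomp {a b : ℕ} (hab : a + 1 ≤ b) :
    Aset a b = Aset (a+1) b ∪ (fun τ => Equiv.swap a (a+1) * τ) '' Aset (a+2) b := by
  rw [← aset_filter_fix, ← aset_filter_swap hab]
  ext σ
  simp only [Set.mem_union, Set.mem_setOf_eq]
  constructor
  · intro h
    by_cases hfix : σ a = a
    · exact Or.inl ⟨h, hfix⟩
    · exact Or.inr ⟨h, hfix⟩
  · rintro (⟨h, _⟩ | ⟨h, _⟩) <;> exact h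

lemma aset_finite_le {a b : ℕ} (h : b ≤ a) : (Aset a b).Finite := by
  rcases eq_or_lt_of_le h with h | h
  · subst h; rw [aset_eq_self]; exact Set.finite_singleton _
  · rw [aset_gt h]; exact Set.finite_singleton _

lemma aset_finite_aux : ∀ k a b, b ≤ a + k → (Aset a b).Finite := by
  intro k
  induction k with
  | zero => intro a b h; exact aset_finite_le (by omega)
  | succ k ih =>
    intro a b h
    by_cases hab : a + 1 ≤ b
    · rw [aset_decomp hab]
      exact ((ih (a+1) b (by omega)).union ((ih (a+2) b (by omega)).image _))
    · exact aset_finite_le (by omega)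

lemma aset_finite (a b : ℕ) : (Aset a b).Finite := aset_finite_aux b a b (by omega)

lemma Icc_split {a b : ℕ} (h : a ≤ b) :
    Finset.Icc a b = insert a (Finset.Icc (a+1) b) := by
  ext x; simp only [Finset.mem_insert, Finset.mem_Icc]; omega

lemma Ssum_gt {ta : ℕ → ℕ → ℝ} {a b : ℕ} (h : b < a) : Ssum ta a b = 1 := by
  rw [Ssum, aset_gt h, finsum_mem_singleton, Finset.Icc_eq_empty (by omega), Finset.prod_empty]

lemma Ssum_self {ta : ℕ → ℕ → ℝ} {a : ℕ} : Ssum ta a a = ta a a := by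
  rw [Ssum, aset_eq_self, finsum_mem_singleton, Finset.Icc_self, Finset.prod_singleton]
  simp

lemma Ssum_rec {ta : ℕ → ℕ → ℝ} {a b : ℕ} (hab : a + 1 ≤ b) :
    Ssum ta a b = ta a a * Ssum ta (a+1) b + ta a (a+1) * ta (a+1) a * Ssum ta (a+2) b := by
  have hd : Disjoint (Aset (a+1) b) ((fun τ => Equiv.swap a (a+1) * τ) '' Aset (a+2) b) := by
    rw [Set.disjoint_left]
    rintro σ hσ ⟨τ, hτ, rfl⟩
    have h1 : (Equiv.swap a (a+1) * τ) a = a := hσ.2.1 a (by simp only [Finset.mem_Icc, not_and_or, not_le]; omega)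
    have h2 := (swap_mul_facts hτ).1
    omega
  rw [Ssum, aset_decomp hab,
    finsum_mem_union hd (aset_finite _ _) ((aset_finite _ _).image _)]
  congr 1
  · have h1 : ∀ σ ∈ Aset (a+1) b,
        (∏ j ∈ Finset.Icc a b, ta j (σ j)) = ta a a * ∏ j ∈ Finset.Icc (a+1) b, ta j (σ j) := by
      intro σ hσ
      have ha : σ a = a := hσ.2.1 a (by simp only [Finset.mem_Icc, not_and_or, not_le]; omega)
      rw [Icc_split (by omega : a ≤ b),
        Finset.prod_insert (by simp only [Finset.mem_Icc, not_and_or, not_le]; omega), ha]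
    rw [finsum_mem_congr rfl h1, Ssum,
      finsum_mem_eq_finite_toFinset_sum _ (aset_finite (a+1) b),
      finsum_mem_eq_finite_toFinset_sum _ (aset_finite (a+1) b), Finset.mul_sum]
  · rw [finsum_mem_image (fun τ1 _ τ2 _ h => mul_left_cancel h)]
    have h1 : ∀ τ ∈ Aset (a+2) b,
        (∏ j ∈ Finset.Icc a b, ta j ((Equiv.swap a (a+1) * τ) j)) =
          ta a (a+1) * ta (a+1) a * ∏ j ∈ Finset.Icc (a+2) b, ta j (τ j) := by
      intro τ hτ
      obtain ⟨k1, k2, k3⟩ := swap_mul_facts (b := b) hτ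
      rw [Icc_split (by omega : a ≤ b),
        Finset.prod_insert (by simp only [Finset.mem_Icc, not_and_or, not_le]; omega),
        Icc_split (by omega : a + 1 ≤ b),
        Finset.prod_insert (by simp only [Finset.mem_Icc, not_and_or, not_le]; omega),
        k1, k2, ← mul_assoc]
      congr 1
      exact Finset.prod_congr rfl fun j hj => by
        rw [k3 j (by simp only [Finset.mem_Icc] at hj; omega) (by simp only [Finset.mem_Icc] at hj; omega)]
    rw [finsum_mem_congr rfl h1, Ssum,
      finsum_mem_eq_finite_toFinset_sum _ (aset_finite (a+2) b),
      finsum_mem_eq_finite_toFinset_sum _ (aset_finite (a+2) b), Finset.mul_sum]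

lemma key_lemma (n : ℕ) (hn : 2 ≤ n) (ta : ℕ → ℕ → ℝ) (x : ℕ → ℝ)
    (hx : ∀ i, 1 ≤ i → i ≤ n → Ft n ta x i = 0) :
    ∀ m i, 1 ≤ i → i ≤ n → n - i ≤ m →
      x i * ∏ j ∈ Finset.Icc (i + 1) n, ta j (j - 1) =
        x n * Ssum ta (i + 1) n +
          ∑ k ∈ Finset.Icc (i + 1) n,
            ta k 0 * (∏ l ∈ Finset.Icc (k + 1) n, ta l (l - 1)) * Ssum ta (i + 1) (k - 1) := by
  intro m
  induction m with
  | zero =>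
    intro i hi1 hi2 him
    have hin : i = n := by omega
    subst hin
    rw [Finset.Icc_eq_empty (by omega), Finset.prod_empty, Finset.sum_empty,
      Ssum_gt (by omega)]
    ring
  | succ m ih =>
    intro i hi1 hi2 him
    rcases eq_or_lt_of_le hi2 with hin | hin
    · -- i = n
      subst hin
      rw [Finset.Icc_eq_empty (by omega), Finset.prod_empty, Finset.sum_empty,
        Ssum_gt (by omega)]
      ring
    rcases eq_or_lt_of_le (show i + 1 ≤ n by omega) with hin1 | hin1
    · -- i + 1 = n
      subst hin1
      have hF := hx (i + 1) (by omega) (by omega)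
      have hFt : Ft (i + 1) ta x (i + 1) =
          -ta (i + 1) 0 + ta (i + 1) (i + 1 - 1) * x (i + 1 - 1) - ta (i + 1) (i + 1) * x (i + 1) := by
        unfold Ft
        rw [if_neg (by omega), if_pos rfl]
      rw [hFt] at hF
      simp only [Nat.add_sub_cancel] at hF
      rw [Finset.Icc_self, Finset.prod_singleton, Finset.sum_singleton, Ssum_self,
        Finset.Icc_eq_empty (by omega : ¬ i + 1 + 1 ≤ i + 1), Finset.prod_empty]
      simp only [Nat.add_sub_cancel]
      rw [Ssum_gt (by omega)]
      linear_combination hF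
    · -- i + 2 ≤ n
      have hi2n : i + 2 ≤ n := by omega
      have hF := hx (i + 1) (by omega) (by omega)
      simp only [Ft] at hF
      rw [if_neg (by omega), if_neg (by omega)] at hF
      simp only [Nat.add_sub_cancel, show i + 1 + 1 = i + 2 from rfl] at hF
      have IH1 := ih (i + 1) (by omega) (by omega) (by omega)
      have IH2 := ih (i + 2) (by omega) (by omega) (by omega)
      simp only [show i + 1 + 1 = i + 2 from rfl, show i + 2 + 1 = i + 3 from rfl] at IH1 IH2
      -- product splittings
      have hP1 : (∏ j ∈ Finset.Icc (i + 1) n, ta j (j - 1)) =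
          ta (i + 1) i * ∏ j ∈ Finset.Icc (i + 2) n, ta j (j - 1) := by
        rw [Icc_split (by omega : i + 1 ≤ n),
          Finset.prod_insert (by simp only [Finset.mem_Icc, not_and_or, not_le]; omega)]
        simp
      have hP2 : (∏ j ∈ Finset.Icc (i + 2) n, ta j (j - 1)) =
          ta (i + 2) (i + 1) * ∏ j ∈ Finset.Icc (i + 3) n, ta j (j - 1) := by
        rw [Icc_split (by omega : i + 2 ≤ n),
          Finset.prod_insert (by simp only [Finset.mem_Icc, not_and_or, not_le]; omega)]
        simp [show i + 2 - 1 = i + 1 from rfl]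
      -- Ssum recurrence at top level
      have hS : Ssum ta (i + 1) n =
          ta (i + 1) (i + 1) * Ssum ta (i + 2) n +
            ta (i + 1) (i + 2) * ta (i + 2) (i + 1) * Ssum ta (i + 3) n := by
        have := Ssum_rec (ta := ta) (a := i + 1) (b := n) (by omega)
        simpa only [show i + 1 + 1 = i + 2 from rfl, show i + 1 + 2 = i + 3 from rfl] using this
      -- sum splittings in the goal
      have hsum1 : (∑ k ∈ Finset.Icc (i + 1) n,
            ta k 0 * (∏ l ∈ Finset.Icc (k + 1) n, ta l (l - 1)) * Ssum ta (i + 1) (k - 1)) =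
          ta (i + 1) 0 * (∏ l ∈ Finset.Icc (i + 2) n, ta l (l - 1)) * Ssum ta (i + 1) i +
            ∑ k ∈ Finset.Icc (i + 2) n,
              ta k 0 * (∏ l ∈ Finset.Icc (k + 1) n, ta l (l - 1)) * Ssum ta (i + 1) (k - 1) := by
        rw [Icc_split (by omega : i + 1 ≤ n),
          Finset.sum_insert (by simp only [Finset.mem_Icc, not_and_or, not_le]; omega)]
        simp
      have hsum2 : (∑ k ∈ Finset.Icc (i + 2) n,
            ta k 0 * (∏ l ∈ Finset.Icc (k + 1) n, ta l (l - 1)) * Ssum ta (i + 1) (k - 1)) =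
          ta (i + 2) 0 * (∏ l ∈ Finset.Icc (i + 3) n, ta l (l - 1)) * Ssum ta (i + 1) (i + 1) +
            ∑ k ∈ Finset.Icc (i + 3) n,
              ta k 0 * (∏ l ∈ Finset.Icc (k + 1) n, ta l (l - 1)) * Ssum ta (i + 1) (k - 1) := by
        rw [Icc_split (by omega : i + 2 ≤ n),
          Finset.sum_insert (by simp only [Finset.mem_Icc, not_and_or, not_le]; omega)]
        simp [show i + 2 - 1 = i + 1 from rfl]
      -- recurrence inside tail sum
      have hsum3 : (∑ k ∈ Finset.Icc (i + 3) n,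
            ta k 0 * (∏ l ∈ Finset.Icc (k + 1) n, ta l (l - 1)) * Ssum ta (i + 1) (k - 1)) =
          ta (i + 1) (i + 1) * ∑ k ∈ Finset.Icc (i + 3) n,
              ta k 0 * (∏ l ∈ Finset.Icc (k + 1) n, ta l (l - 1)) * Ssum ta (i + 2) (k - 1) +
            ta (i + 1) (i + 2) * ta (i + 2) (i + 1) * ∑ k ∈ Finset.Icc (i + 3) n,
              ta k 0 * (∏ l ∈ Finset.Icc (k + 1) n, ta l (l - 1)) * Ssum ta (i + 3) (k - 1) := by
        rw [Finset.mul_sum, Finset.mul_sum, ← Finset.sum_add_distrib]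
        refine Finset.sum_congr rfl fun k hk => ?_
        simp only [Finset.mem_Icc] at hk
        have hrec := Ssum_rec (ta := ta) (a := i + 1) (b := k - 1) (by omega)
        simp only [show i + 1 + 1 = i + 2 from rfl, show i + 1 + 2 = i + 3 from rfl] at hrec
        rw [hrec]; ring
      -- split sum inside IH1
      have hsumIH1 : (∑ k ∈ Finset.Icc (i + 2) n,
            ta k 0 * (∏ l ∈ Finset.Icc (k + 1) n, ta l (l - 1)) * Ssum ta (i + 2) (k - 1)) =
          ta (i + 2) 0 * (∏ l ∈ Finset.Icc (i + 3) n, ta l (l - 1)) * Ssum ta (i + 2) (i + 1) +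
            ∑ k ∈ Finset.Icc (i + 3) n,
              ta k 0 * (∏ l ∈ Finset.Icc (k + 1) n, ta l (l - 1)) * Ssum ta (i + 2) (k - 1) := by
        rw [Icc_split (by omega : i + 2 ≤ n),
          Finset.sum_insert (by simp only [Finset.mem_Icc, not_and_or, not_le]; omega)]
        simp [show i + 2 - 1 = i + 1 from rfl]
      rw [hsumIH1, Ssum_gt (by omega : i + 1 < i + 2)] at IH1
      rw [hP1, hS, hsum1, hsum2, hsum3, Ssum_gt (by omega : i < i + 1), Ssum_self]
      linear_combination (∏ j ∈ Finset.Icc (i + 2) n, ta j (j - 1)) * hF +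
        ta (i + 1) (i + 1) * IH1 +
        (ta (i + 1) (i + 2) * ta (i + 2) (i + 1)) * IH2 +
        (ta (i + 1) (i + 2) * x (i + 2)) * hP2


/-- Back-substitution identity for zeros of `F̃`: for `1 ≤ i ≤ n−1`,
`x_i Π_{j=i+1}^{n} ã_{j,j−1} = x_n S_{i+1}^{n} + ã_{i+1,0} Π_{j=i+2}^{n} ã_{j,j−1}
  + Σ_{k=i+2}^{n} ã_{k0} (Π_{l=k+1}^{n} ã_{l,l−1}) S_{i+1}^{k−1}`. -/
theorem stmt2 (n : ℕ) (hn : 2 ≤ n) (ta : ℕ → ℕ → ℝ)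
    (hi0 : ∀ i, 2 ≤ i → i ≤ n → 0 < ta i 0)
    (h11 : 0 < ta 1 1)
    (hii : ∀ i, 2 ≤ i → i ≤ n → 0 ≤ ta i i)
    (hlow : ∀ i, 2 ≤ i → i ≤ n → 0 < ta i (i - 1))
    (hup : ∀ i, 1 ≤ i → i ≤ n - 1 → 0 < ta i (i + 1)) :
    ∀ x : ℕ → ℝ, (∀ i, 1 ≤ i → i ≤ n → Ft n ta x i = 0) →
      ∀ i, 1 ≤ i → i ≤ n - 1 →
        x i * ∏ j ∈ Finset.Icc (i + 1) n, ta j (j - 1) =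
          x n * Ssum ta (i + 1) n
            + ta (i + 1) 0 * ∏ j ∈ Finset.Icc (i + 2) n, ta j (j - 1)
            + ∑ k ∈ Finset.Icc (i + 2) n,
                ta k 0 * (∏ l ∈ Finset.Icc (k + 1) n, ta l (l - 1)) * Ssum ta (i + 1) (k - 1) := by
  intro x hx i hi1 hi2
  have h := key_lemma n hn ta x hx n i hi1 (by omega) (by omega)
  rw [Icc_split (by omega : i + 1 ≤ n),
    Finset.sum_insert (by simp only [Finset.mem_Icc, not_and_or, not_le]; omega)] at h
  simp only [Nat.add_sub_cancel] at h
  rw [Ssum_gt (by omega : i < i + 1), mul_one,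
    ← Icc_split (by omega : i + 1 ≤ n)] at h
  simp only [show i + 1 + 1 = i + 2 from rfl] at h
  rw [h]
  ring
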